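/- arXiv:1504.00984 — 2 statements merged into one kernel-verified Lean document; each statement's English description precedes it below -/
import Mathlib

section
/- Let V be a linear subspace of ℝⁿ, let Ω ⊆ S^{n−1} ∩ V⊥, let C ⊆ S^{n−1}, and define P := {r·u + v : r ∈ [0,1], u ∈ Ω, v ∈ V}. If P ∩ C is nonempty, then W(P ∩ C) = P ∩ W(C). -/
/-- The wedge `W(S) = {r·x : x ∈ S, r ∈ [0,1]}`. -/
def wedge {n : ℕ} (S : Set (EuclideanSpace ℝ (Fin n))) : Set (EuclideanSpace ℝ (Fin n)) :=
  {y | ∃ r ∈ Set.Icc (0 : ℝ) 1, ∃ x ∈ S, y = r • x}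

/-- If `Ω ⊆ S^{n-1} ∩ V⊥`, `C ⊆ S^{n-1}`, and
`P = {r·u + v : r ∈ [0,1], u ∈ Ω, v ∈ V}`, then whenever `P ∩ C` is nonempty,
`W(P ∩ C) = P ∩ W(C)`. -/
theorem stmt11 (n : ℕ) (V : Submodule ℝ (EuclideanSpace ℝ (Fin n)))
    (Ω C : Set (EuclideanSpace ℝ (Fin n)))
    (hΩ : Ω ⊆ {x | ‖x‖ = 1} ∩ (Vᗮ : Set (EuclideanSpace ℝ (Fin n))))
    (hC : C ⊆ {x | ‖x‖ = 1})
    (P : Set (EuclideanSpace ℝ (Fin n)))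
    (hP : P = {y | ∃ r ∈ Set.Icc (0 : ℝ) 1, ∃ u ∈ Ω, ∃ v ∈ V, y = r • u + v})
    (hne : (P ∩ C).Nonempty) :
    wedge (P ∩ C) = P ∩ wedge C := by
  ext y
  constructor
  · rintro ⟨r, hr, x, ⟨hxP, hxC⟩, rfl⟩
    rw [hP] at hxP ⊢
    obtain ⟨s, hs, u, hu, v, hv, hx⟩ := hxP
    refine ⟨⟨r * s, ⟨mul_nonneg hr.1 hs.1, mul_le_one₀ hr.2 hs.1 hs.2⟩, u, hu, r • v,
      V.smul_mem r hv, ?_⟩, ⟨r, hr, x, hxC, rfl⟩⟩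
    rw [hx, smul_add, smul_smul]
  · rintro ⟨hyP, r, hr, x, hxC, rfl⟩
    by_cases hr0 : r = 0
    · obtain ⟨z, hz⟩ := hne
      exact ⟨0, ⟨le_refl 0, zero_le_one⟩, z, hz, by rw [hr0, zero_smul, zero_smul]⟩
    · rw [hP] at hyP
      obtain ⟨s, hs, u, hu, v, hv, heq⟩ := hyP
      have hu1 : ‖u‖ = 1 := (hΩ hu).1
      have huV : u ∈ Vᗮ := (hΩ hu).2
      have hx1 : ‖x‖ = 1 := hC hxC
      have hperp : (inner ℝ u v : ℝ) = 0 := (Submodule.mem_orthogonal' V u).mp huV v hv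
      have hrpos : 0 < r := lt_of_le_of_ne hr.1 (Ne.symm hr0)
      have hnorm : r ^ 2 = s ^ 2 + ‖v‖ ^ 2 := by
        have h1 : ‖r • x‖ = r := by
          rw [norm_smul, hx1, Real.norm_eq_abs, abs_of_nonneg hr.1, mul_one]
        have h2 : ‖s • u + v‖ ^ 2 = s ^ 2 + ‖v‖ ^ 2 := by
          rw [norm_add_sq_real, norm_smul, real_inner_smul_left, hperp, hu1,
            Real.norm_eq_abs, mul_one, sq_abs]
          ring
        rw [← h1, heq, h2]
      have hsr : s ≤ r := by nlinarith [hs.1, norm_nonneg v]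
      have hxP : x ∈ P := by
        rw [hP]
        refine ⟨s / r, ⟨div_nonneg hs.1 hr.1, (div_le_one hrpos).mpr hsr⟩, u, hu,
          r⁻¹ • v, V.smul_mem _ hv, ?_⟩
        have := congrArg (fun w => r⁻¹ • w) heq
        simp only [smul_add, smul_smul, inv_mul_cancel₀ hr0, one_smul] at this
        rw [this, div_eq_inv_mul]
      exact ⟨r, hr, x, ⟨hxP, hxC⟩, rfl⟩
end

section
/- Let V be a linear subspace of ℝⁿ, let z ∈ V be a unit vector, let t < 1, and let C := {x ∈ S^{n−1} : ⟨x,z⟩ ≥ t}. Then for every u ∈ S^{n−1} ∩ V⊥, every v ∈ V, and every r ∈ [0,1]: r·u + v ∈ W(C) if and only if either r² + ‖v‖₂² = 0, or ( r² + ‖v‖₂² ≤ 1 and ⟨v,z⟩ ≥ √(r² + ‖v‖₂²)·t ). -/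
open scoped RealInnerProductSpace

/-- Membership of `r·u + v` (with `u ∈ S^{n-1} ∩ V⊥`, `v ∈ V`, `r ∈ [0,1]`) in the
wedge of the spherical cap `C = {x ∈ S^{n-1} : ⟪x,z⟫ ≥ t}` is characterized by:
either `r² + ‖v‖² = 0`, or `r² + ‖v‖² ≤ 1` and `⟪v,z⟫ ≥ √(r² + ‖v‖²)·t`. -/
theorem stmt12 (n : ℕ) (V : Submodule ℝ (EuclideanSpace ℝ (Fin n)))
    (z : EuclideanSpace ℝ (Fin n)) (hzV : z ∈ V) (hz : ‖z‖ = 1)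
    (t : ℝ) (ht : t < 1) :
    ∀ u : EuclideanSpace ℝ (Fin n), ‖u‖ = 1 → u ∈ Vᗮ →
    ∀ v : EuclideanSpace ℝ (Fin n), v ∈ V →
    ∀ r : ℝ, r ∈ Set.Icc (0 : ℝ) 1 →
      (r • u + v ∈ wedge {x : EuclideanSpace ℝ (Fin n) | ‖x‖ = 1 ∧ t ≤ ⟪x, z⟫} ↔
        (r ^ 2 + ‖v‖ ^ 2 = 0 ∨
          (r ^ 2 + ‖v‖ ^ 2 ≤ 1 ∧ Real.sqrt (r ^ 2 + ‖v‖ ^ 2) * t ≤ ⟪v, z⟫))) := by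
  intro u hu huV v hvV r hr
  obtain ⟨hr0, hr1⟩ := hr
  have huv : ⟪u, v⟫ = 0 := by
    rw [real_inner_comm]
    exact (Submodule.mem_orthogonal V u).mp huV v hvV
  have huz : ⟪u, z⟫ = 0 := by
    rw [real_inner_comm]
    exact (Submodule.mem_orthogonal V u).mp huV z hzV
  set y := r • u + v with hy
  have hnn : (0:ℝ) ≤ r ^ 2 + ‖v‖ ^ 2 := by positivity
  have hnorm : ‖y‖ ^ 2 = r ^ 2 + ‖v‖ ^ 2 := by
    rw [hy, norm_add_sq_real, inner_smul_left, huv, norm_smul, Real.norm_eq_abs,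
      abs_of_nonneg hr0, hu]
    ring
  have hρ : ‖y‖ = Real.sqrt (r ^ 2 + ‖v‖ ^ 2) := by
    rw [← hnorm, Real.sqrt_sq (norm_nonneg y)]
  have hyz : ⟪y, z⟫ = ⟪v, z⟫ := by
    rw [hy, inner_add_left, inner_smul_left, huz]
    simp
  have hzcap : z ∈ {x : EuclideanSpace ℝ (Fin n) | ‖x‖ = 1 ∧ t ≤ ⟪x, z⟫} := by
    refine ⟨hz, ?_⟩
    have : ⟪z, z⟫ = 1 := by
      rw [real_inner_self_eq_norm_sq, hz]; norm_num
    rw [this]; exact ht.le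
  constructor
  · rintro ⟨s, ⟨hs0, hs1⟩, x, ⟨hx1, hx2⟩, heq⟩
    have hny : ‖y‖ = s := by
      rw [heq, norm_smul, Real.norm_eq_abs, abs_of_nonneg hs0, hx1, mul_one]
    rcases eq_or_lt_of_le hs0 with h0 | h0
    · left
      rw [← hnorm, hny, ← h0]
      norm_num
    · right
      constructor
      · calc r ^ 2 + ‖v‖ ^ 2 = s ^ 2 := by rw [← hnorm, hny]
          _ ≤ 1 := by nlinarith
      · have : ⟪y, z⟫ = s * ⟪x, z⟫ := by rw [heq, inner_smul_left]; norm_num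
        rw [← hρ, hny, ← hyz, this]
        exact mul_le_mul_of_nonneg_left hx2 hs0
  · rintro (h | ⟨h1, h2⟩)
    · have hr' : r = 0 := by nlinarith [sq_nonneg r, sq_nonneg ‖v‖]
      have hv' : ‖v‖ = 0 := by nlinarith [sq_nonneg r, sq_nonneg ‖v‖]
      have hv0 : v = 0 := norm_eq_zero.mp hv'
      refine ⟨0, ⟨le_refl 0, by norm_num⟩, z, hzcap, ?_⟩
      rw [hy, hr', hv0]; simp
    · rcases eq_or_lt_of_le hnn with h0 | h0
      · have hr' : r = 0 := by nlinarith [sq_nonneg r, sq_nonneg ‖v‖]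
        have hv' : ‖v‖ = 0 := by nlinarith [sq_nonneg r, sq_nonneg ‖v‖]
        have hv0 : v = 0 := norm_eq_zero.mp hv'
        refine ⟨0, ⟨le_refl 0, by norm_num⟩, z, hzcap, ?_⟩
        rw [hy, hr', hv0]; simp
      · set ρ := Real.sqrt (r ^ 2 + ‖v‖ ^ 2) with hρdef
        have hρpos : 0 < ρ := Real.sqrt_pos.mpr h0
        have hρ1 : ρ ≤ 1 := by
          rw [hρdef, show (1:ℝ) = Real.sqrt 1 by simp]
          exact Real.sqrt_le_sqrt h1
        refine ⟨ρ, ⟨hρpos.le, hρ1⟩, ρ⁻¹ • y, ⟨?_, ?_⟩, ?_⟩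
        · rw [norm_smul, Real.norm_eq_abs, abs_of_nonneg (inv_nonneg.mpr hρpos.le), hρ]
          field_simp
        · have : ⟪ρ⁻¹ • y, z⟫ = ρ⁻¹ * ⟪v, z⟫ := by
            rw [inner_smul_left, hyz]; norm_num
          rw [this, ← mul_le_mul_iff_right₀ hρpos]
          calc ρ * t ≤ ⟪v, z⟫ := h2
            _ = ρ * (ρ⁻¹ * ⟪v, z⟫) := by field_simp
        · rw [smul_smul, mul_inv_cancel₀ hρpos.ne', one_smul]
end
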